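/- For all p, q ≥ 0, FN^(p) ⋄ FN^(q) ⊆ FN^(p+q); that is, the product ⋄ on FN(X) respects the grading by degree. -/

import Mathlib

open scoped TensorProduct

universe u v w

/-- Letters of bracketed words in `X`: either a variable from `X` or a bracket
`⌊u⌋` enclosing a (bracketed) word `u`. Lists of letters are exactly the bracketed
words, i.e. the elements of the free operated monoid `𝔐(X)`. -/
inductive Lt (X : Type u) : Type u
  | var : X → Lt X
  | brk : List (Lt X) → Lt X

namespace Nij

noncomputable section

variable {X : Type u}

/-- Two letters may be adjacent in an "alternating" word iff they are not both brackets. -/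
def altP : Lt X → Lt X → Prop
  | Lt.brk _, Lt.brk _ => False
  | _, _ => True

/-- A letter is good (i.e. lies in `X ⊔ ⌊𝔛_∞⌋`) if each bracket encloses a word whose
letters are good and in which no two consecutive letters are brackets. -/
inductive GoodL : Lt X → Prop
  | var (x : X) : GoodL (Lt.var x)
  | brk (u : List (Lt X)) (h1 : ∀ a ∈ u, GoodL a) (h2 : List.Chain' altP u) :
      GoodL (Lt.brk u)

/-- The words in `𝔛_∞`: all letters good and no two consecutive brackets. -/
def GoodW (w : List (Lt X)) : Prop := (∀ a ∈ w, GoodL a) ∧ List.Chain' altP w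

/-- The set `𝔛_∞` of basis words of the free Nijenhuis algebra. -/
def NW (X : Type u) : Type u := {w : List (Lt X) // GoodW w}

/-- The free Nijenhuis algebra `FN(X) = k𝔛_∞` as a `k`-module. -/
abbrev FN (k : Type v) [CommRing k] (X : Type u) : Type (max u v) := NW X →₀ k

/-- The empty word `1 ∈ 𝔛_∞`. -/
def one : NW X := ⟨[], ⟨by simp, List.isChain_nil⟩⟩

/-- A single good letter forms a good word. -/
lemma goodW_singleton {a : Lt X} (h : GoodL a) : GoodW [a] := by
  constructor
  · intro b hb
    rw [List.mem_singleton] at hb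
    exact hb ▸ h
  · exact List.isChain_singleton _

/-- The single-letter word `x ∈ 𝔛_∞` for `x ∈ X`. -/
def varW (x : X) : NW X := ⟨[Lt.var x], goodW_singleton (GoodL.var x)⟩

/-- The word `⌊w⌋ ∈ 𝔛_∞` for `w ∈ 𝔛_∞`. -/
def NopW (w : NW X) : NW X := ⟨[Lt.brk w.1], goodW_singleton (GoodL.brk _ w.2.1 w.2.2)⟩

/-- The single-letter word `[a] ∈ 𝔛_∞` for a good letter `a ∈ X ⊔ ⌊𝔛_∞⌋`. -/
def letterW (a : Lt X) (h : GoodL a) : NW X := ⟨[a], goodW_singleton h⟩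

variable (k : Type v) [CommRing k]

/-- The basis element of `FN(X)` corresponding to `w ∈ 𝔛_∞`. -/
def bw (w : NW X) : FN k X := Finsupp.single w 1

/-- The Nijenhuis operator `N_X` on `FN(X)`, the linear extension of `w ↦ ⌊w⌋`. -/
def Nop : FN k X →ₗ[k] FN k X := Finsupp.lmapDomain k k NopW

/-- The natural linear embedding `k𝔛_∞ → k𝔐(X)` into the monoid algebra of the free
monoid of bracketed words, used to express concatenation of words linearly. -/
def iota : FN k X →ₗ[k] MonoidAlgebra k (FreeMonoid (Lt X)) :=
  (MonoidAlgebra.coeffLinearEquiv k).symm.toLinearMap ∘ₗ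
    Finsupp.lmapDomain k k (fun w : NW X => FreeMonoid.ofList w.1)

/-- The left counit `ε : FN(X) → k`, `ε(1) = 1` and `ε(w) = 0` for `1 ≠ w ∈ 𝔛_∞`. -/
def eps : FN k X →ₗ[k] k := Finsupp.lapply one

/-- A specification of the product `⋄` on `FN(X) = k𝔛_∞`: a `k`-bilinear map satisfying
the defining recursive equations of the paper. These equations determine `⋄` uniquely.

* `concat`: if the last letter of `u` and the first letter of `v` are not both brackets
  (in particular if `u` or `v` is empty), then `u ⋄ v` is the concatenation `uv`.
* `brkbrk`: `⌊ū⌋ ⋄ ⌊v̄⌋ = ⌊ū ⋄ ⌊v̄⌋⌋ + ⌊⌊ū⌋ ⋄ v̄⌋ − ⌊⌊ū ⋄ v̄⌋⌋`.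
* `split`: if `u = u₀a` and `v = bv₀` then `u ⋄ v = u₀ (a ⋄ b) v₀`, the outer products
  being concatenation (expressed in the monoid algebra `k𝔐(X)` via `iota`). -/
structure DiamondSpec (k : Type v) (X : Type u) [CommRing k] where
  mul : FN k X →ₗ[k] FN k X →ₗ[k] FN k X
  concat : ∀ u v : NW X,
    (¬ ∃ (a b : List (Lt X)), u.1.getLast? = some (Lt.brk a) ∧ v.1.head? = some (Lt.brk b)) →
    iota k (mul (bw k u) (bw k v)) = iota k (bw k u) * iota k (bw k v)
  brkbrk : ∀ u v : NW X,
    mul (Nop k (bw k u)) (Nop k (bw k v)) =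
      Nop k (mul (bw k u) (Nop k (bw k v))) + Nop k (mul (Nop k (bw k u)) (bw k v))
        - Nop k (Nop k (mul (bw k u) (bw k v)))
  split : ∀ (u v : NW X) (u₀ v₀ : List (Lt X)) (a b : Lt X)
      (ha : GoodW [a]) (hb : GoodW [b]),
      u.1 = u₀ ++ [a] → v.1 = b :: v₀ →
      iota k (mul (bw k u) (bw k v)) =
        MonoidAlgebra.of k (FreeMonoid (Lt X)) (FreeMonoid.ofList u₀) *
          iota k (mul (bw k ⟨[a], ha⟩) (bw k ⟨[b], hb⟩)) *
          MonoidAlgebra.of k (FreeMonoid (Lt X)) (FreeMonoid.ofList v₀)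

/-- The componentwise product on `FN(X) ⊗ FN(X)` induced by `⋄`:
`(a ⊗ b) ⋄ (c ⊗ d) = (a ⋄ c) ⊗ (b ⋄ d)`. -/
def mul2 (d : DiamondSpec k X) :
    (FN k X ⊗[k] FN k X) →ₗ[k] (FN k X ⊗[k] FN k X) →ₗ[k] (FN k X ⊗[k] FN k X) :=
  TensorProduct.lift <| LinearMap.mk₂ k
    (fun a b => TensorProduct.map (d.mul a) (d.mul b))
    (fun a a' b => by simp only [map_add, TensorProduct.map_add_left])
    (fun c a b => by simp only [map_smul, TensorProduct.map_smul_left])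
    (fun a b b' => by simp only [map_add, TensorProduct.map_add_right])
    (fun c a b => by simp only [map_smul, TensorProduct.map_smul_right])

/-- A specification of the coproduct `Δ` on `FN(X)`: a `k`-linear map satisfying the
defining equations of the paper. These equations determine `Δ` uniquely.

* `delta_one`: `Δ(1) = 1 ⊗ 1`;
* `delta_var`: `Δ(x) = 1 ⊗ x` for `x ∈ X`;
* `delta_brk`: `Δ(⌊w⌋) = (id ⊗ N_X) Δ(w)` (the 1-cocycle condition on basis elements);
* `delta_split`: `Δ(w₁ ⋄ ⋯ ⋄ w_m) = Δ(w₁) ⋄ (Δ(w₂) ⋄ ⋯ ⋄ Δ(w_m))` for the alternating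
  `⋄`-factorization of a word into its letters, stated in its binary recursive form. -/
structure DeltaSpec (k : Type v) (X : Type u) [CommRing k] extends DiamondSpec k X where
  delta : FN k X →ₗ[k] FN k X ⊗[k] FN k X
  delta_one : delta (bw k one) = bw k one ⊗ₜ[k] bw k one
  delta_var : ∀ x : X, delta (bw k (varW x)) = bw k one ⊗ₜ[k] bw k (varW x)
  delta_brk : ∀ w : NW X,
    delta (Nop k (bw k w)) = LinearMap.lTensor (FN k X) (Nop k) (delta (bw k w))
  delta_split : ∀ (w : NW X) (a : Lt X) (rest : List (Lt X))
      (ha : GoodW [a]) (hrest : GoodW rest), w.1 = a :: rest → rest ≠ [] →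
      delta (bw k w) =
        mul2 k toDiamondSpec (delta (bw k ⟨[a], ha⟩)) (delta (bw k ⟨rest, hrest⟩))

/-- The product `w₁ ⋄ w₂ ⋄ ⋯ ⋄ w_m ∈ FN(X)` of a sequence of letters from `X ⊔ ⌊𝔛_∞⌋`
(the empty product being `1`). -/
def prodOf (d : DiamondSpec k X) : (l : List (Lt X)) → (∀ a ∈ l, GoodL a) → FN k X
  | [], _ => bw k one
  | a :: rest, h =>
      d.mul (bw k (letterW a (h a (List.mem_cons_self (a := a) (l := rest)))))
        (prodOf d rest (fun b hb => h b (List.mem_cons_of_mem a hb)))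

mutual
  /-- The degree of a letter: `deg(x) = 1` for `x ∈ X`, `deg(⌊u⌋) = 1 + deg(u)`. -/
  def degL : Lt X → ℕ
    | Lt.var _ => 1
    | Lt.brk u => 1 + degList u
  /-- The degree of a bracketed word: the total number of occurrences of elements of `X`
  and of brackets `⌊·⌋` in it. -/
  def degList : List (Lt X) → ℕ
    | [] => 0
    | a :: rest => degL a + degList rest
end

/-- The homogeneous component `FN^(n)`: the `k`-span of the basis words of degree `n`. -/
def FNdeg (n : ℕ) : Submodule k (FN k X) :=
  Submodule.span k {f | ∃ w : NW X, degList w.1 = n ∧ f = bw k w}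

/-- The image `A ⊗ B` of the tensor product of two submodules inside `M ⊗ M`. -/
def tsub {M : Type w} [AddCommGroup M] [Module k M] (A B : Submodule k M) :
    Submodule k (M ⊗[k] M) :=
  Submodule.span k {x | ∃ a ∈ A, ∃ b ∈ B, x = a ⊗ₜ[k] b}


lemma degList_append (l1 l2 : List (Lt X)) :
    degList (l1 ++ l2) = degList l1 + degList l2 := by
  induction l1 with
  | nil => simp [degList]
  | cons a t ih => simp [degList, ih]; omega

lemma altP_of_left {x y : Lt X} (h : ∀ l, x ≠ Lt.brk l) : altP x y := by
  cases x with
  | var _ => cases y <;> trivial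
  | brk l => exact absurd rfl (h l)

lemma altP_of_right {x y : Lt X} (h : ∀ l, y ≠ Lt.brk l) : altP x y := by
  cases y with
  | var _ => cases x <;> trivial
  | brk l => exact absurd rfl (h l)

lemma iota_injective : Function.Injective (iota k (X := X)) := by
  intro a b h
  have hinj : Function.Injective (fun w : NW X => FreeMonoid.ofList w.1) :=
    fun a b hab => Subtype.ext (FreeMonoid.ofList.injective hab)
  exact Finsupp.mapDomain_injective hinj (by simpa [iota, Finsupp.lmapDomain_apply] using h)

lemma iota_bw (w : NW X) :
    iota k (bw k w) = MonoidAlgebra.single (FreeMonoid.ofList w.1) (1 : k) := by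
  simp [iota, bw, Finsupp.lmapDomain_apply, Finsupp.mapDomain_single, MonoidAlgebra.ofCoeff_single]

lemma Nop_bw (w : NW X) : Nop k (bw k w) = bw k (NopW w) := by
  simp [Nop, bw, Finsupp.lmapDomain_apply, Finsupp.mapDomain_single]

lemma bw_mem_FNdeg {n : ℕ} (w : NW X) (h : degList w.1 = n) : bw k w ∈ FNdeg k n :=
  Submodule.subset_span ⟨w, h, rfl⟩

lemma Nop_mem_FNdeg {n : ℕ} {f : FN k X} (hf : f ∈ FNdeg k n) :
    Nop k f ∈ FNdeg k (n + 1) := by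
  induction hf using Submodule.span_induction with
  | mem x hx =>
      obtain ⟨w, hw, rfl⟩ := hx
      rw [Nop_bw]
      refine bw_mem_FNdeg k _ ?_
      simp [NopW, degList, degL, hw]; omega
  | zero => simp
  | add x y _ _ hx hy => rw [map_add]; exact add_mem hx hy
  | smul c x _ hx => rw [map_smul]; exact Submodule.smul_mem _ _ hx

lemma mapDomain_mem_FNdeg {m n : ℕ} (g : NW X → NW X)
    (hg : ∀ w : NW X, degList w.1 = m → degList (g w).1 = n)
    {f : FN k X} (hf : f ∈ FNdeg k m) : Finsupp.mapDomain g f ∈ FNdeg k n := by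
  induction hf using Submodule.span_induction with
  | mem x hx =>
      obtain ⟨w, hw, rfl⟩ := hx
      rw [show Finsupp.mapDomain g (bw k w) = bw k (g w) from Finsupp.mapDomain_single]
      exact bw_mem_FNdeg k _ (hg w hw)
  | zero => simp
  | add x y _ _ hx hy => rw [Finsupp.mapDomain_add]; exact add_mem hx hy
  | smul c x _ hx => rw [Finsupp.mapDomain_smul]; exact Submodule.smul_mem _ _ hx

lemma iota_mapDomain (u₀ v₀ : List (Lt X)) (g : NW X → NW X)
    (hg : ∀ w, (g w).1 = u₀ ++ w.1 ++ v₀) (f : FN k X) :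
    iota k (Finsupp.mapDomain g f) =
      MonoidAlgebra.single (FreeMonoid.ofList u₀) (1 : k) * iota k f *
        MonoidAlgebra.single (FreeMonoid.ofList v₀) (1 : k) := by
  induction f using Finsupp.induction_linear with
  | zero => simp
  | add f₁ f₂ h₁ h₂ =>
      simp only [Finsupp.mapDomain_add, map_add, mul_add, add_mul, h₁, h₂]
  | single w c =>
      rw [Finsupp.mapDomain_single]
      have h1 : iota k (Finsupp.single (g w) c)
          = MonoidAlgebra.single (FreeMonoid.ofList (g w).1) c := by
        simp [iota, Finsupp.lmapDomain_apply, Finsupp.mapDomain_single, MonoidAlgebra.ofCoeff_single]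
      have h2 : iota k (Finsupp.single w c)
          = MonoidAlgebra.single (FreeMonoid.ofList w.1) c := by
        simp [iota, Finsupp.lmapDomain_apply, Finsupp.mapDomain_single, MonoidAlgebra.ofCoeff_single]
      rw [h1, h2, MonoidAlgebra.single_mul_single, MonoidAlgebra.single_mul_single,
        hg w, FreeMonoid.ofList_append, FreeMonoid.ofList_append]
      simp [mul_assoc]

lemma mul_bw_mem (d : DiamondSpec k X) :
    ∀ n : ℕ, ∀ u v : NW X, degList u.1 + degList v.1 = n →
      d.mul (bw k u) (bw k v) ∈ FNdeg k n := by
  intro n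
  induction n using Nat.strong_induction_on with
  | _ n ih =>
  intro u v hn
  by_cases hc : ∃ a b : List (Lt X),
      u.1.getLast? = some (Lt.brk a) ∧ v.1.head? = some (Lt.brk b)
  · obtain ⟨ab, bb, hlast, hhead⟩ := hc
    obtain ⟨u₀, hu⟩ := List.getLast?_eq_some_iff.mp hlast
    obtain ⟨v₀, hv⟩ := List.head?_eq_some_iff.mp hhead
    -- good letters
    have hga : GoodL (Lt.brk ab) := u.2.1 _ (by rw [hu]; simp)
    have hgb : GoodL (Lt.brk bb) := v.2.1 _ (by rw [hv]; simp)
    have ha : GoodW [Lt.brk ab] := goodW_singleton hga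
    have hb : GoodW [Lt.brk bb] := goodW_singleton hgb
    rcases hga with _ | ⟨_, hA1, hA2⟩
    rcases hgb with _ | ⟨_, hB1, hB2⟩
    set A : NW X := ⟨ab, hA1, hA2⟩ with hAdef
    set B : NW X := ⟨bb, hB1, hB2⟩ with hBdef
    -- degree bookkeeping
    rw [hu, hv] at hn
    simp only [degList_append, degList, degL] at hn
    -- chain facts
    have hchu : List.IsChain altP u.1 := u.2.2
    rw [hu, List.isChain_append] at hchu
    have hchv : List.IsChain altP v.1 := v.2.2
    rw [hv, List.isChain_cons] at hchv
    have hulast : ∀ l, u₀.getLast? ≠ some (Lt.brk l) := by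
      intro l hl
      have := hchu.2.2 (Lt.brk l) hl (Lt.brk ab) rfl
      simpa [altP] using this
    have hvhead : ∀ l, v₀.head? ≠ some (Lt.brk l) := by
      intro l hl
      have := hchv.1 (Lt.brk l) hl
      simpa [altP] using this
    have hu₀g : ∀ a ∈ u₀, GoodL a :=
      fun a h => u.2.1 a (by rw [hu]; exact List.mem_append_left _ h)
    have hv₀g : ∀ a ∈ v₀, GoodL a :=
      fun a h => v.2.1 a (by rw [hv]; exact List.mem_cons_of_mem _ h)
    have hgood : ∀ w : NW X, GoodW (u₀ ++ w.1 ++ v₀) := by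
      intro w
      constructor
      · intro a haa
        rcases List.mem_append.mp haa with h | h
        · rcases List.mem_append.mp h with h' | h'
          · exact hu₀g a h'
          · exact w.2.1 a h'
        · exact hv₀g a h
      · change List.IsChain altP (u₀ ++ w.1 ++ v₀)
        rw [List.isChain_append, List.isChain_append]
        refine ⟨⟨hchu.1, w.2.2, ?_⟩, hchv.2, ?_⟩
        · intro x hx y hy
          refine altP_of_left (fun l hl => hulast l ?_)
          rw [← hl]; exact hx
        · intro x hx y hy
          refine altP_of_right (fun l hl => hvhead l ?_)
          rw [← hl]; exact hy
    -- the inner product of the two boundary bracket letters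
    have hA' : bw k (⟨[Lt.brk ab], ha⟩ : NW X) = Nop k (bw k A) := (Nop_bw k A).symm
    have hB' : bw k (⟨[Lt.brk bb], hb⟩ : NW X) = Nop k (bw k B) := (Nop_bw k B).symm
    have e1 : d.mul (bw k A) (Nop k (bw k B)) ∈ FNdeg k (degList ab + degList bb + 1) := by
      rw [Nop_bw]
      refine ih _ (by omega) A (NopW B) ?_
      simp [NopW, degList, degL, hAdef, hBdef]; omega
    have e2 : d.mul (Nop k (bw k A)) (bw k B) ∈ FNdeg k (degList ab + degList bb + 1) := by
      rw [Nop_bw]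
      refine ih _ (by omega) (NopW A) B ?_
      simp [NopW, degList, degL, hAdef, hBdef]; omega
    have e3 : d.mul (bw k A) (bw k B) ∈ FNdeg k (degList ab + degList bb) := by
      refine ih _ (by omega) A B ?_
      simp [hAdef, hBdef]
    have hG : d.mul (bw k (⟨[Lt.brk ab], ha⟩ : NW X)) (bw k (⟨[Lt.brk bb], hb⟩ : NW X))
        ∈ FNdeg k (degList ab + degList bb + 1 + 1) := by
      rw [hA', hB', d.brkbrk A B]
      exact sub_mem (add_mem (Nop_mem_FNdeg k e1) (Nop_mem_FNdeg k e2))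
        (Nop_mem_FNdeg k (Nop_mem_FNdeg k e3))
    -- transport along concatenation with u₀ and v₀
    have hfinal : d.mul (bw k u) (bw k v) =
        Finsupp.mapDomain (fun w : NW X => (⟨u₀ ++ w.1 ++ v₀, hgood w⟩ : NW X))
          (d.mul (bw k (⟨[Lt.brk ab], ha⟩ : NW X)) (bw k (⟨[Lt.brk bb], hb⟩ : NW X))) := by
      apply iota_injective k
      erw [d.split u v u₀ v₀ (Lt.brk ab) (Lt.brk bb) ha hb hu hv,
        iota_mapDomain k u₀ v₀ (fun w : NW X => (⟨u₀ ++ w.1 ++ v₀, hgood w⟩ : NW X)) (fun w => rfl)]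
      simp [MonoidAlgebra.of_apply]
    rw [hfinal]
    refine mapDomain_mem_FNdeg k _ (fun w hw => ?_) hG
    simp only [degList_append]
    omega
  · -- the letters at the junction are not both brackets: concatenation
    have hjun : ∀ x ∈ u.1.getLast?, ∀ y ∈ v.1.head?, altP x y := by
      intro x hx y hy
      cases x with
      | var _ => cases y <;> trivial
      | brk a =>
        cases y with
        | var _ => trivial
        | brk b => exact absurd ⟨a, b, hx, hy⟩ hc
    have hgood : GoodW (u.1 ++ v.1) := by
      constructor
      · intro a haa
        rcases List.mem_append.mp haa with h | h
        · exact u.2.1 a h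
        · exact v.2.1 a h
      · exact List.isChain_append.mpr ⟨u.2.2, v.2.2, hjun⟩
    have heq : d.mul (bw k u) (bw k v) = bw k ⟨u.1 ++ v.1, hgood⟩ := by
      apply iota_injective k
      erw [d.concat u v hc, iota_bw, iota_bw, iota_bw, MonoidAlgebra.single_mul_single,
        mul_one, FreeMonoid.ofList_append]
    rw [heq]
    refine bw_mem_FNdeg k _ ?_
    rw [degList_append]
    exact hn

/-- the product `⋄` respects the grading of `FN(X)` by degree:
`FN^(p) ⋄ FN^(q) ⊆ FN^(p+q)` for all `p, q ≥ 0`. -/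
theorem stmt11_graded_mul (k : Type v) [CommRing k] {X : Type u}
    (d : DiamondSpec k X) (p q : ℕ) :
    ∀ a ∈ FNdeg k (X := X) p, ∀ b ∈ FNdeg k q, d.mul a b ∈ FNdeg k (p + q) := by
  intro a ha
  induction ha using Submodule.span_induction with
  | mem x hx =>
      obtain ⟨u, hu, rfl⟩ := hx
      intro b hb
      induction hb using Submodule.span_induction with
      | mem y hy =>
          obtain ⟨v, hv, rfl⟩ := hy
          exact mul_bw_mem k d (p + q) u v (by omega)
      | zero => simp
      | add x y _ _ hx hy => rw [map_add]; exact add_mem hx hy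
      | smul c x _ hx => rw [map_smul]; exact Submodule.smul_mem _ _ hx
  | zero => intro b hb; simp
  | add x y _ _ hx hy =>
      intro b hb
      rw [map_add, LinearMap.add_apply]
      exact add_mem (hx b hb) (hy b hb)
  | smul c x _ hx =>
      intro b hb
      rw [map_smul, LinearMap.smul_apply]
      exact Submodule.smul_mem _ _ (hx b hb)

end

end Nij
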